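/- There exists a 2-dimensional word w over a 4-letter alphabet such that every line of w is 3^+-power-free: for all i_1, i_2 and coprime j_1, j_2, the word (w_{i_1+j_1 t, i_2+j_2 t})_{t≥0} contains no q-power for any rational q > 3. -/

import Mathlib

/-- The paperfolding-type bit: the bit just above the lowest set bit of `n`. -/
def pf (n : ℕ) : ℕ :=
  if h : n = 0 then 0
  else if n % 2 = 0 then pf (n / 2) else n / 2 % 2
termination_by n
decreasing_by exact Nat.div_lt_self (Nat.pos_of_ne_zero h) one_lt_two

lemma pf_even (m : ℕ) : pf (2 * m) = pf m := by
  rcases Nat.eq_zero_or_pos m with h | h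
  · subst h; rfl
  · rw [pf]
    rw [dif_neg (by omega : ¬ 2 * m = 0), if_pos (Nat.mul_mod_right 2 m),
      Nat.mul_div_cancel_left m two_pos]

lemma pf_odd (n : ℕ) (h : n % 2 = 1) : pf n = n / 2 % 2 := by
  rw [pf, dif_neg (by omega : ¬ n = 0), if_neg (by omega)]

lemma pf_le_one (n : ℕ) : pf n ≤ 1 := by
  induction n using Nat.strong_induction_on with
  | _ n ih =>
    rw [pf]
    split
    · omega
    · split
      · exact ih _ (Nat.div_lt_self (by omega) one_lt_two)
      · omega

/-- Key mismatch lemma: if `n ≡ 2^e (mod 2^(e+1))` and `D ≡ 2^(e+1) (mod 2^(e+2))`,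
then `pf n ≠ pf (n + D)`. -/
lemma pf_L1 (e : ℕ) : ∀ n D : ℕ, n % (2 ^ e * 2) = 2 ^ e → D % (2 ^ e * 4) = 2 ^ e * 2 →
    pf n ≠ pf (n + D) := by
  induction e with
  | zero =>
    intro n D hn hD
    simp only [pow_zero, one_mul] at hn hD
    rw [pf_odd n hn, pf_odd (n + D) (by omega)]
    omega
  | succ e ih =>
    intro n D hn hD
    have hA : 0 < 2 ^ e := pow_pos two_pos e
    rw [pow_succ] at hn hD
    have hn2 : n % 2 = 0 := by
      have h1 : n % (2 ^ e * 2 * 2) % 2 = n % 2 :=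
        Nat.mod_mod_of_dvd n ⟨2 ^ e * 2, by ring⟩
      omega
    have hD2 : D % 2 = 0 := by
      have h1 : D % (2 ^ e * 2 * 4) % 2 = D % 2 :=
        Nat.mod_mod_of_dvd D ⟨2 ^ e * 4, by ring⟩
      omega
    have hmn : n / 2 % (2 ^ e * 2) = 2 ^ e := by
      rw [← Nat.mod_mul_right_div_self]
      rw [show 2 * (2 ^ e * 2) = 2 ^ e * 2 * 2 by ring, hn]
      exact Nat.mul_div_cancel _ two_pos
    have hmD : D / 2 % (2 ^ e * 4) = 2 ^ e * 2 := by
      rw [← Nat.mod_mul_right_div_self]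
      rw [show 2 * (2 ^ e * 4) = 2 ^ e * 2 * 4 by ring, hD]
      rw [show 2 ^ e * 2 * 2 = 2 ^ e * 2 * 2 from rfl]
      omega
    have h1 : pf n = pf (n / 2) := by
      have := pf_even (n / 2)
      rwa [show 2 * (n / 2) = n by omega] at this
    have h2 : pf (n + D) = pf (n / 2 + D / 2) := by
      have := pf_even (n / 2 + D / 2)
      rwa [show 2 * (n / 2 + D / 2) = n + D by omega] at this
    rw [h1, h2]
    exact ih (n / 2) (D / 2) hmn hmD

/-- Covering: an AP with odd difference hits any residue class mod `2^e`
within `2^e` steps. -/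
lemma pf_cover (j a r : ℕ) (hj : j % 2 = 1) : ∀ e, ∃ t < 2 ^ e,
    (a + j * t) % 2 ^ e = r % 2 ^ e := by
  intro e
  induction e with
  | zero => exact ⟨0, Nat.one_pos, by simp [Nat.mod_one]⟩
  | succ e ih =>
    obtain ⟨t, ht, he⟩ := ih
    rw [pow_succ]
    have hB : 0 < 2 ^ e := pow_pos two_pos e
    by_cases hcase : (a + j * t) % (2 ^ e * 2) = r % (2 ^ e * 2)
    · exact ⟨t, by omega, hcase⟩
    · refine ⟨t + 2 ^ e, by omega, ?_⟩
      obtain ⟨s, hs⟩ : ∃ s, j = 2 * s + 1 := ⟨j / 2, by omega⟩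
      have hrw : a + j * (t + 2 ^ e) = (a + j * t + 2 ^ e) + s * (2 ^ e * 2) := by
        rw [hs]; ring
      rw [hrw, Nat.add_mul_mod_self_right]
      have hmo : a + j * t ≡ r [MOD 2 ^ e] := he
      obtain ⟨c, hc⟩ := (Nat.modEq_iff_dvd.mp hmo)
      rcases Int.even_or_odd c with ⟨d, hd⟩ | ⟨d, hd⟩
      · exfalso
        apply hcase
        refine Nat.modEq_iff_dvd.mpr ⟨d, ?_⟩
        push_cast at hc ⊢
        rw [hd] at hc
        linarith
      · refine Nat.modEq_iff_dvd.mpr ⟨d, ?_⟩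
        push_cast
        have : (r : ℤ) - (a + j * t) = 2 ^ e * c := by push_cast at hc ⊢; linarith
        rw [hd] at this
        push_cast at this ⊢
        linarith

/-- The central claim: the paperfolding bit along any AP with odd difference `j`
has a `p`-mismatch within `2p` steps. -/
lemma pf_key (a j p : ℕ) (hj : j % 2 = 1) (hp : 0 < p) :
    ∃ t ≤ 2 * p, pf (a + j * t) ≠ pf (a + j * t + j * p) := by
  rcases Nat.even_or_odd p with hpe | hpo
  · -- p even
    obtain ⟨e, o, ho, hpeq⟩ := Nat.exists_eq_two_pow_mul_odd (by omega : p ≠ 0)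
    obtain ⟨e', rfl⟩ : ∃ e', e = e' + 1 := by
      refine ⟨e - 1, ?_⟩
      rcases Nat.eq_zero_or_pos e with h0 | h1
      · exfalso; rw [h0, pow_zero, one_mul] at hpeq
        rw [hpeq] at hpe; exact (Nat.not_even_iff_odd.mpr ho) hpe
      · omega
    obtain ⟨t, ht, hres⟩ := pf_cover j a (2 ^ e') hj (e' + 1)
    have hdvd : 2 ^ (e' + 1) ≤ p := Nat.le_of_dvd hp ⟨o, hpeq⟩
    refine ⟨t, by omega, ?_⟩
    apply pf_L1 e' (a + j * t) (j * p)
    · rw [pow_succ] at hres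
      rw [hres]
      exact Nat.mod_eq_of_lt (by omega)
    · obtain ⟨s, hs⟩ : ∃ s, j * o = 2 * s + 1 := by
        refine ⟨(j * o) / 2, ?_⟩
        have h1 : (j * o) % 2 = 1 := by
          rw [Nat.mul_mod, hj, Nat.odd_iff.mp ho]
        omega
      have : j * p = (2 ^ e' * 4) * s + 2 ^ e' * 2 := by
        rw [hpeq, show j * (2 ^ (e' + 1) * o) = 2 ^ (e' + 1) * (j * o) by ring, hs]
        rw [pow_succ]; ring
      rw [this, Nat.mul_add_mod]
      exact Nat.mod_eq_of_lt (by have := pow_pos (two_pos : (0:ℕ) < 2) e'; omega)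
  · -- p odd
    have hpodd := Nat.odd_iff.mp hpo
    set t₀ := if a % 2 = 1 then 0 else 1 with ht₀
    have htle : t₀ ≤ 1 := by rw [ht₀]; split <;> omega
    have hodd : (a + j * t₀) % 2 = 1 := by
      rw [ht₀]; split <;> rename_i h <;> simp <;> omega
    by_cases hne : pf (a + j * t₀) = pf (a + j * t₀ + j * p)
    · refine ⟨t₀ + p, by omega, ?_⟩
      have hjp : (j * p) % 2 = 1 := by rw [Nat.mul_mod, hj, hpodd]
      have hL1 := pf_L1 0 (a + j * t₀) (2 * (j * p))
        (by simpa using hodd) (by simp only [pow_zero, one_mul]; omega)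
      rw [show a + j * (t₀ + p) + j * p = a + j * t₀ + 2 * (j * p) by ring,
        show a + j * (t₀ + p) = a + j * t₀ + j * p by ring, ← hne]
      exact hL1
    · exact ⟨t₀, by omega, hne⟩


lemma flat_getElem {α : Type*} (x x' : List α) (hpre : x' <+: x) (hx : 0 < x.length) :
    ∀ (k : ℕ) (n : ℕ) (hn : n < ((List.replicate k x).flatten ++ x').length),
      ((List.replicate k x).flatten ++ x')[n] = x[n % x.length]'(Nat.mod_lt n hx) := by
  intro k
  induction k with
  | zero =>
    intro n hn
    simp only [List.replicate_zero, List.flatten_nil, List.nil_append] at hn ⊢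
    have hlt : n < x.length := lt_of_lt_of_le hn hpre.length_le
    rw [List.IsPrefix.getElem hpre hn]
    congr 1
    exact (Nat.mod_eq_of_lt hlt).symm
  | succ k ih =>
    intro n hn
    have hl : (List.replicate (k + 1) x).flatten ++ x'
        = x ++ ((List.replicate k x).flatten ++ x') := by
      rw [List.replicate_succ, List.flatten_cons, List.append_assoc]
    rw [List.getElem_of_eq hl hn]
    have hn' : n < x.length + ((List.replicate k x).flatten ++ x').length := by
      rw [← List.length_append, ← hl]; exact hn
    rcases lt_or_ge n x.length with h | h
    · rw [List.getElem_append_left h]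
      congr 1
      exact (Nat.mod_eq_of_lt h).symm
    · rw [List.getElem_append_right h]
      rw [ih (n - x.length) (by omega)]
      congr 1
      exact (Nat.mod_eq_sub_mod h).symm


/-- The 2-dimensional word: pair of paperfolding bits, encoded in `Fin 4`. -/
def pfw (m n : ℕ) : Fin 4 :=
  ⟨2 * pf m + pf n, by have h1 := pf_le_one m; have h2 := pf_le_one n; omega⟩

lemma pfw_inj {m n m' n' : ℕ} (h : pfw m n = pfw m' n') :
    pf m = pf m' ∧ pf n = pf n' := by
  have := congrArg Fin.val h
  simp only [pfw] at this
  have h1 := pf_le_one m; have h2 := pf_le_one n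
  have h3 := pf_le_one m'; have h4 := pf_le_one n'
  omega



def IsSubword {α : Type*} (f : ℕ → α) (x : List α) : Prop :=
  ∃ i, x = (List.range x.length).map fun m => f (i + m)

/-- There is a 2-dimensional word over a 4-letter alphabet all of whose lines
are `3⁺`-power-free. -/
theorem exists_two_dim_word_lines_three_plus_power_free :
    ∃ w : ℕ → ℕ → Fin 4,
      ∀ (i₁ i₂ : ℕ) (j₁ j₂ : ℤ), Int.gcd j₁ j₂ = 1 →
        (∀ t : ℕ, 0 ≤ (i₁ : ℤ) + j₁ * t) → (∀ t : ℕ, 0 ≤ (i₂ : ℤ) + j₂ * t) →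
        ∀ (q : ℚ) (x x' : List (Fin 4)) (k : ℕ), 3 < q → x ≠ [] → x' <+: x →
          (((List.replicate k x).flatten ++ x').length : ℚ) = q * x.length →
          ¬ IsSubword
            (fun t : ℕ => w ((i₁ : ℤ) + j₁ * t).toNat ((i₂ : ℤ) + j₂ * t).toNat)
            ((List.replicate k x).flatten ++ x') := by
  refine ⟨pfw, ?_⟩
  intro i₁ i₂ j₁ j₂ hgcd hpos₁ hpos₂ q x x' k hq hxne hpre hlen hsub
  obtain ⟨i, hi⟩ := hsub
  set l := (List.replicate k x).flatten ++ x' with hl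
  set p := x.length with hp'
  have hp : 0 < p := List.length_pos_iff.mpr hxne
  -- the length is more than 3p
  have hL : 3 * p + 1 ≤ l.length := by
    have hpq : (0 : ℚ) < (p : ℚ) := by exact_mod_cast hp
    have h1 : ((3 * p : ℕ) : ℚ) < (l.length : ℚ) := by
      rw [hlen]; push_cast
      nlinarith
    have := (Nat.cast_lt (α := ℚ)).mp h1
    omega
  -- slopes are nonnegative
  have hj₁ : 0 ≤ j₁ := by
    by_contra h
    push_neg at h
    have h1 := hpos₁ (i₁ + 1)
    have h2 : j₁ * ((i₁ + 1 : ℕ) : ℤ) ≤ -1 * ((i₁ + 1 : ℕ) : ℤ) := by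
      apply mul_le_mul_of_nonneg_right (by omega) (by positivity)
    push_cast at h1 h2
    linarith
  have hj₂ : 0 ≤ j₂ := by
    by_contra h
    push_neg at h
    have h1 := hpos₂ (i₂ + 1)
    have h2 : j₂ * ((i₂ + 1 : ℕ) : ℤ) ≤ -1 * ((i₂ + 1 : ℕ) : ℤ) := by
      apply mul_le_mul_of_nonneg_right (by omega) (by positivity)
    push_cast at h1 h2
    linarith
  set J₁ := j₁.toNat with hJ₁d
  set J₂ := j₂.toNat with hJ₂d
  have hJ₁ : ((J₁ : ℤ)) = j₁ := Int.toNat_of_nonneg hj₁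
  have hJ₂ : ((J₂ : ℤ)) = j₂ := Int.toNat_of_nonneg hj₂
  -- one of the slopes is odd
  have hoddor : J₁ % 2 = 1 ∨ J₂ % 2 = 1 := by
    by_contra hcon
    push_neg at hcon
    have hg : Nat.gcd j₁.natAbs j₂.natAbs = 1 := hgcd
    have hd1 : 2 ∣ j₁.natAbs := ⟨j₁.natAbs / 2, by omega⟩
    have hd2 : 2 ∣ j₂.natAbs := ⟨j₂.natAbs / 2, by omega⟩
    have := Nat.dvd_gcd hd1 hd2
    rw [hg] at this
    omega
  -- the window, as a function
  have hF : ∀ n (hn : n < l.length),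
      l[n]'hn = pfw (i₁ + J₁ * (i + n)) (i₂ + J₂ * (i + n)) := by
    intro n hn
    rw [List.getElem_of_eq hi hn, List.getElem_map, List.getElem_range]
    show pfw ((i₁ : ℤ) + j₁ * (↑(i + n))).toNat ((i₂ : ℤ) + j₂ * (↑(i + n))).toNat = _
    congr 1
    · rw [show (i₁ : ℤ) + j₁ * (↑(i + n)) = ((i₁ + J₁ * (i + n) : ℕ) : ℤ) by
        rw [← hJ₁]; push_cast; ring, Int.toNat_natCast]
    · rw [show (i₂ : ℤ) + j₂ * (↑(i + n)) = ((i₂ + J₂ * (i + n) : ℕ) : ℤ) by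
        rw [← hJ₂]; push_cast; ring, Int.toNat_natCast]
  -- periodicity of the window
  have hper : ∀ t, t + p < l.length →
      pfw (i₁ + J₁ * (i + t)) (i₂ + J₂ * (i + t))
        = pfw (i₁ + J₁ * (i + (t + p))) (i₂ + J₂ * (i + (t + p))) := by
    intro t ht
    have h2 : t < l.length := by omega
    rw [← hF t h2, ← hF (t + p) ht]
    rw [flat_getElem x x' hpre hp k t h2, flat_getElem x x' hpre hp k (t + p) ht]
    congr 1
    exact (Nat.add_mod_right t p).symm
  rcases hoddor with hodd | hodd
  · obtain ⟨t, ht, hne⟩ := pf_key (i₁ + J₁ * i) J₁ p hodd hp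
    have h1 : t + p < l.length := by omega
    have := (pfw_inj (hper t h1)).1
    apply hne
    rw [show i₁ + J₁ * i + J₁ * t = i₁ + J₁ * (i + t) by ring,
      show i₁ + J₁ * (i + t) + J₁ * p = i₁ + J₁ * (i + (t + p)) by ring]
    exact this
  · obtain ⟨t, ht, hne⟩ := pf_key (i₂ + J₂ * i) J₂ p hodd hp
    have h1 : t + p < l.length := by omega
    have := (pfw_inj (hper t h1)).2
    apply hne
    rw [show i₂ + J₂ * i + J₂ * t = i₂ + J₂ * (i + t) by ring,
      show i₂ + J₂ * (i + t) + J₂ * p = i₂ + J₂ * (i + (t + p)) by ring]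
    exact this
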